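/- If a scalar first-order ODE y' = f(t, y) has f real-analytic in a neighborhood of (t0, y0), then there exists a unique real-analytic solution y(t) in a neighborhood of t0 with y(t0) = y0 (a special case of the Cauchy–Kovalevskaya theorem). -/

import Mathlib

open Metric Complex

noncomputable section CKaux

/-- basis vectors of `ℝ × ℝ`. -/
def CKeb : Bool → ℝ × ℝ := fun b => cond b (0,1) (1,0)

/-- coordinate functionals on `ℂ × ℂ`. -/
def CKphi : Bool → (ℂ × ℂ →L[ℂ] ℂ) :=
  fun b => cond b (ContinuousLinearMap.snd ℂ ℂ ℂ) (ContinuousLinearMap.fst ℂ ℂ ℂ)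

def CKcoord : ℝ × ℝ → Bool → ℝ := fun w b => cond b w.2 w.1

/-- Complexification of a continuous multilinear map on `(ℝ × ℝ)^n`. -/
def CKmc {n : ℕ} (c : ContinuousMultilinearMap ℝ (fun _ : Fin n => ℝ × ℝ) ℝ) :
    ContinuousMultilinearMap ℂ (fun _ : Fin n => ℂ × ℂ) ℂ :=
  ∑ s : Fin n → Bool,
    (ContinuousMultilinearMap.mkPiRing ℂ (Fin n)
      (((c fun i => CKeb (s i)) : ℝ) : ℂ)).compContinuousLinearMap (fun i => CKphi (s i))

lemma CKmc_apply {n : ℕ} (c : ContinuousMultilinearMap ℝ (fun _ : Fin n => ℝ × ℝ) ℝ)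
    (v : Fin n → ℂ × ℂ) :
    CKmc c v = ∑ s : Fin n → Bool,
      (∏ i, CKphi (s i) (v i)) * (((c fun i => CKeb (s i)) : ℝ) : ℂ) := by
  simp [CKmc, ContinuousMultilinearMap.sum_apply,
    ContinuousMultilinearMap.compContinuousLinearMap_apply, smul_eq_mul]

lemma CKeb_norm (b : Bool) : ‖CKeb b‖ = 1 := by
  cases b <;> simp [CKeb, Prod.norm_def]

lemma CKphi_norm_le (b : Bool) : ‖CKphi b‖ ≤ 1 := by
  cases b
  · exact ContinuousLinearMap.norm_fst_le ℂ ℂ ℂ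
  · exact ContinuousLinearMap.norm_snd_le ℂ ℂ ℂ

lemma CKmc_norm_le {n : ℕ} (c : ContinuousMultilinearMap ℝ (fun _ : Fin n => ℝ × ℝ) ℝ) :
    ‖CKmc c‖ ≤ 2 ^ n * ‖c‖ := by
  refine (norm_sum_le _ _).trans ?_
  have hterm : ∀ s : Fin n → Bool,
      ‖(ContinuousMultilinearMap.mkPiRing ℂ (Fin n)
        (((c fun i => CKeb (s i)) : ℝ) : ℂ)).compContinuousLinearMap (fun i => CKphi (s i))‖
        ≤ ‖c‖ := by
    intro s
    refine (ContinuousMultilinearMap.norm_compContinuousLinearMap_le _ _).trans ?_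
    have h1 : ‖ContinuousMultilinearMap.mkPiRing ℂ (Fin n)
        (((c fun i => CKeb (s i)) : ℝ) : ℂ)‖ ≤ ‖c‖ := by
      rw [ContinuousMultilinearMap.norm_mkPiRing]
      rw [Complex.norm_real]
      calc ‖c fun i => CKeb (s i)‖ ≤ ‖c‖ * ∏ i, ‖CKeb (s i)‖ :=
            c.le_opNorm _
        _ = ‖c‖ := by simp [CKeb_norm]
    have h2 : (∏ i, ‖CKphi (s i)‖) ≤ 1 := by
      apply Finset.prod_le_one
      · intro i _; exact norm_nonneg _
      · intro i _; exact CKphi_norm_le _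
    calc ‖ContinuousMultilinearMap.mkPiRing ℂ (Fin n)
          (((c fun i => CKeb (s i)) : ℝ) : ℂ)‖ * ∏ i, ‖CKphi (s i)‖
        ≤ ‖c‖ * 1 := by
          apply mul_le_mul h1 h2 (Finset.prod_nonneg fun i _ => norm_nonneg _)
            (le_trans (norm_nonneg _) h1)
      _ = ‖c‖ := mul_one _
  calc ∑ s : Fin n → Bool, ‖(ContinuousMultilinearMap.mkPiRing ℂ (Fin n)
        (((c fun i => CKeb (s i)) : ℝ) : ℂ)).compContinuousLinearMap (fun i => CKphi (s i))‖
      ≤ ∑ _s : Fin n → Bool, ‖c‖ := Finset.sum_le_sum fun s _ => hterm s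
    _ = 2 ^ n * ‖c‖ := by
        simp [Finset.sum_const, Finset.card_univ, Fintype.card_fun]

/-- real basis expansion of a multilinear map -/
lemma CKreal_expand {n : ℕ} (c : ContinuousMultilinearMap ℝ (fun _ : Fin n => ℝ × ℝ) ℝ)
    (v : Fin n → ℝ × ℝ) :
    c v = ∑ s : Fin n → Bool, (∏ i, CKcoord (v i) (s i)) * (c fun i => CKeb (s i)) := by
  have hv : ∀ i, v i = ∑ b : Bool, CKcoord (v i) b • CKeb b := by
    intro i
    simp [CKcoord, CKeb, Fintype.sum_bool, Prod.ext_iff]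
  calc c v = c (fun i => ∑ b : Bool, CKcoord (v i) b • CKeb b) := by
        congr 1; funext i; exact hv i
    _ = ∑ s : Fin n → Bool, c (fun i => CKcoord (v i) (s i) • CKeb (s i)) := by
        exact c.toMultilinearMap.map_sum (fun i b => CKcoord (v i) b • CKeb b)
    _ = ∑ s : Fin n → Bool, (∏ i, CKcoord (v i) (s i)) * (c fun i => CKeb (s i)) := by
        refine Finset.sum_congr rfl fun s _ => ?_
        have := c.toMultilinearMap.map_smul_univ (fun i => CKcoord (v i) (s i))
          (fun i => CKeb (s i))
        simp only [ContinuousMultilinearMap.coe_coe] at this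
        rw [this, smul_eq_mul]

def CKcc : ℝ × ℝ → ℂ × ℂ := fun v => ((v.1 : ℂ), (v.2 : ℂ))

lemma CKphi_cc (b : Bool) (w : ℝ × ℝ) : CKphi b (CKcc w) = ((CKcoord w b : ℝ) : ℂ) := by
  cases b <;> simp [CKphi, CKcc, CKcoord]

/-- the complexification agrees with the original map on real points -/
lemma CKmc_real {n : ℕ} (c : ContinuousMultilinearMap ℝ (fun _ : Fin n => ℝ × ℝ) ℝ)
    (v : Fin n → ℝ × ℝ) :
    CKmc c (fun i => CKcc (v i)) = ((c v : ℝ) : ℂ) := by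
  rw [CKmc_apply, CKreal_expand]
  push_cast
  refine Finset.sum_congr rfl fun s _ => ?_
  congr 1
  refine Finset.prod_congr rfl fun i _ => ?_
  exact CKphi_cc (s i) (v i)

lemma CKphi_conj (b : Bool) (w : ℂ × ℂ) :
    CKphi b ((starRingEnd ℂ) w.1, (starRingEnd ℂ) w.2) = (starRingEnd ℂ) (CKphi b w) := by
  cases b <;> simp [CKphi]

/-- the complexification is conjugation-equivariant -/
lemma CKmc_conj {n : ℕ} (c : ContinuousMultilinearMap ℝ (fun _ : Fin n => ℝ × ℝ) ℝ)
    (v : Fin n → ℂ × ℂ) :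
    CKmc c (fun i => ((starRingEnd ℂ) (v i).1, (starRingEnd ℂ) (v i).2))
      = (starRingEnd ℂ) (CKmc c v) := by
  rw [CKmc_apply, CKmc_apply, map_sum]
  refine Finset.sum_congr rfl fun s _ => ?_
  rw [map_mul, map_prod]
  congr 1
  · exact Finset.prod_congr rfl fun i _ => CKphi_conj (s i) (v i)
  · simp

end CKaux

noncomputable section CKext

/-- Existence of holomorphic extension of a real-analytic function of two variables. -/
lemma CKg_exists (f : ℝ × ℝ → ℝ) (p0 : ℝ × ℝ) (hf : AnalyticAt ℝ f p0) :
    ∃ (g : ℂ × ℂ → ℂ) (ρ : ℝ), 0 < ρ ∧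
      AnalyticOnNhd ℂ g (ball (CKcc p0) ρ) ∧
      (∀ v : ℝ × ℝ, dist v p0 < ρ → g (CKcc v) = ((f v : ℝ) : ℂ)) ∧
      (∀ z : ℂ × ℂ, z ∈ ball (CKcc p0) ρ →
        g ((starRingEnd ℂ) z.1, (starRingEnd ℂ) z.2) = (starRingEnd ℂ) (g z)) := by
  obtain ⟨pf, rf, hrf⟩ := hf
  obtain ⟨r', hr'0, hr'⟩ := ENNReal.lt_iff_exists_nnreal_btwn.mp
    (lt_of_lt_of_le hrf.r_pos hrf.r_le)
  obtain ⟨rr, hrr0, hrr⟩ := ENNReal.lt_iff_exists_nnreal_btwn.mp hrf.r_pos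
  have hr'pos : (0:ℝ) < (r' : ℝ) := by exact_mod_cast hr'0
  have hrrpos : (0:ℝ) < (rr : ℝ) := by exact_mod_cast hrr0
  set gp : FormalMultilinearSeries ℂ (ℂ × ℂ) ℂ := fun k => CKmc (pf k) with hgp
  obtain ⟨C, hC0, hC⟩ := pf.norm_mul_pow_le_of_lt_radius hr'
  have hgprad : (↑(r' / 2) : ENNReal) ≤ gp.radius := by
    apply gp.le_radius_of_bound C
    intro k
    have h1 : ‖gp k‖ ≤ 2 ^ k * ‖pf k‖ := CKmc_norm_le (pf k)
    have h2 : ((r' / 2 : NNReal) : ℝ) = (r' : ℝ) / 2 := by push_cast; ring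
    calc ‖gp k‖ * ((r' / 2 : NNReal) : ℝ) ^ k
        ≤ (2 ^ k * ‖pf k‖) * ((r' : ℝ) / 2) ^ k := by
          rw [h2]
          apply mul_le_mul_of_nonneg_right h1 (pow_nonneg (by positivity) k)
      _ = ‖pf k‖ * (r' : ℝ) ^ k := by
          rw [div_pow]; field_simp
      _ ≤ C := hC k
  set ρ : ℝ := min ((r' : ℝ) / 2) (rr : ℝ) with hρdef
  have hρpos : 0 < ρ := lt_min (by positivity) hrrpos
  set g : ℂ × ℂ → ℂ := fun z => gp.sum (z - CKcc p0) with hgdef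
  have hsum : ∀ w : ℂ × ℂ, ‖w‖ < (r' : ℝ) / 2 →
      HasSum (fun n => gp n fun _ => w) (gp.sum w) := by
    intro w hw
    apply gp.hasSum
    rw [mem_emetric_ball_zero_iff]
    calc (‖w‖₊ : ENNReal) < ((r' / 2 : NNReal) : ENNReal) := by
          rw [ENNReal.coe_lt_coe]
          rw [← NNReal.coe_lt_coe]
          push_cast
          simpa using hw
      _ ≤ gp.radius := hgprad
  -- power series for g
  have hgball : HasFPowerSeriesOnBall g gp (CKcc p0) (↑(r' / 2 : NNReal)) := by
    refine ⟨hgprad, by exact_mod_cast half_pos (show (0:NNReal) < r' by exact_mod_cast hr'0), ?_⟩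
    intro y hy
    rw [mem_emetric_ball_zero_iff, enorm_eq_nnnorm, ENNReal.coe_lt_coe, ← NNReal.coe_lt_coe] at hy
    have hy' : ‖y‖ < (r' : ℝ) / 2 := by
      have := hy; rw [← coe_nnnorm]; push_cast at this ⊢; linarith
    have := hsum y hy'
    simpa [hgdef] using this
  have hganal : AnalyticOnNhd ℂ g (ball (CKcc p0) ρ) := by
    have h := hgball.analyticOnNhd
    rw [Metric.emetric_ball_nnreal] at h
    apply h.mono
    apply ball_subset_ball
    have : ((r' / 2 : NNReal) : ℝ) = (r' : ℝ) / 2 := by push_cast; ring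
    rw [this]
    exact min_le_left _ _
  refine ⟨g, ρ, hρpos, hganal, ?_, ?_⟩
  · -- real agreement
    intro v hv
    have hvw : ‖v - p0‖ < ρ := by rwa [← dist_eq_norm]
    have hccw : ‖CKcc (v - p0)‖ < (r' : ℝ) / 2 := by
      have : ‖CKcc (v - p0)‖ = ‖v - p0‖ := by
        simp only [CKcc, Prod.norm_def, Complex.norm_real]
      rw [this]
      exact lt_of_lt_of_le hvw (min_le_left _ _)
    -- complex sum
    have h1 : HasSum (fun n => gp n fun _ => CKcc (v - p0)) (gp.sum (CKcc (v - p0))) :=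
      hsum _ hccw
    -- real sum mapped to ℂ
    have hmem : v - p0 ∈ Metric.eball (0 : ℝ × ℝ) rf := by
      rw [mem_emetric_ball_zero_iff]
      calc (‖v - p0‖₊ : ENNReal) < ((rr : NNReal) : ENNReal) := by
            rw [ENNReal.coe_lt_coe, ← NNReal.coe_lt_coe, coe_nnnorm]
            exact lt_of_lt_of_le hvw (min_le_right _ _)
        _ ≤ rf := le_of_lt hrr
    have h2 : HasSum (fun n => pf n fun _ => (v - p0)) (f (p0 + (v - p0))) :=
      hrf.hasSum hmem
    have h3 : HasSum (fun n => ((pf n fun _ => (v - p0) : ℝ) : ℂ))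
        (((f (p0 + (v - p0)) : ℝ) : ℂ)) := h2.mapL Complex.ofRealCLM
    have hterm : ∀ n, ((pf n fun _ => (v - p0) : ℝ) : ℂ) = gp n fun _ => CKcc (v - p0) := by
      intro n
      exact (CKmc_real (pf n) (fun _ => (v - p0))).symm
    rw [funext hterm] at h3
    have := h1.unique h3
    have hvv : CKcc v - CKcc p0 = CKcc (v - p0) := by simp [CKcc, Prod.ext_iff]
    simp only [hgdef, hvv, this]
    congr 1
    simp
  · -- conjugation
    intro z hz
    have hw : ‖z - CKcc p0‖ < (r' : ℝ) / 2 := by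
      rw [← dist_eq_norm]
      exact lt_of_lt_of_le hz (min_le_left _ _)
    set w := z - CKcc p0 with hwdef
    have h1 : HasSum (fun n => gp n fun _ => w) (gp.sum w) := hsum _ hw
    have h1c : HasSum (fun n => (starRingEnd ℂ) (gp n fun _ => w))
        ((starRingEnd ℂ) (gp.sum w)) := by
      exact h1.mapL Complex.conjCLE.toContinuousLinearMap
    have hterm : ∀ n, (starRingEnd ℂ) (gp n fun _ => w)
        = gp n fun _ => ((starRingEnd ℂ) w.1, (starRingEnd ℂ) w.2) := by
      intro n
      exact (CKmc_conj (pf n) (fun _ => w)).symm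
    rw [funext hterm] at h1c
    have hwc : ‖((starRingEnd ℂ) w.1, (starRingEnd ℂ) w.2)‖ < (r' : ℝ) / 2 := by
      have : ‖((starRingEnd ℂ) w.1, (starRingEnd ℂ) w.2)‖ = ‖w‖ := by
        simp [Prod.norm_def]
      rwa [this]
    have h2 : HasSum (fun n => gp n fun _ => ((starRingEnd ℂ) w.1, (starRingEnd ℂ) w.2))
        (gp.sum ((starRingEnd ℂ) w.1, (starRingEnd ℂ) w.2)) := hsum _ hwc
    have heq := h2.unique h1c
    have hzz : ((starRingEnd ℂ) z.1, (starRingEnd ℂ) z.2) - CKcc p0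
        = ((starRingEnd ℂ) w.1, (starRingEnd ℂ) w.2) := by
      simp only [hwdef, CKcc, Prod.ext_iff, Prod.fst_sub, Prod.snd_sub]
      constructor <;> · rw [map_sub]; simp
    simp only [hgdef, hzz]
    exact heq

end CKext

open Metric Complex intervalIntegral MeasureTheory

noncomputable section CKprim

/-- The path `s ↦ c + s(x - c)`. -/
def CKl (c : ℂ) (s : ℝ) (x : ℂ) : ℂ := c + (s : ℂ) * (x - c)

lemma CKl_mem_closedBall {c x : ℂ} {r : ℝ} (hx : ‖x - c‖ ≤ r) {s : ℝ} (hs0 : 0 ≤ s)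
    (hs1 : s ≤ 1) : CKl c s x ∈ closedBall c r := by
  rw [mem_closedBall, dist_eq_norm]
  have : CKl c s x - c = (s : ℂ) * (x - c) := by rw [CKl]; ring
  rw [this, norm_mul]
  calc ‖(s : ℂ)‖ * ‖x - c‖ ≤ 1 * r := by
        apply mul_le_mul _ hx (norm_nonneg _) zero_le_one
        rw [Complex.norm_real, Real.norm_eq_abs, _root_.abs_of_nonneg hs0]; exact hs1
    _ = r := one_mul r

lemma CKl_mem_ball {c x : ℂ} {r : ℝ} (hx : ‖x - c‖ < r) {s : ℝ} (hs0 : 0 ≤ s)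
    (hs1 : s ≤ 1) : CKl c s x ∈ ball c r := by
  rcases lt_or_ge 0 r with hr | hr
  · have := CKl_mem_closedBall (le_of_lt hx) hs0 hs1 (c := c) (x := x)
    rw [mem_ball, dist_eq_norm]
    have h2 : CKl c s x - c = (s : ℂ) * (x - c) := by rw [CKl]; ring
    rw [h2, norm_mul]
    calc ‖(s : ℂ)‖ * ‖x - c‖ ≤ 1 * ‖x - c‖ := by
          apply mul_le_mul _ le_rfl (norm_nonneg _) zero_le_one
          rw [Complex.norm_real, Real.norm_eq_abs, _root_.abs_of_nonneg hs0]; exact hs1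
      _ < r := by rw [one_mul]; exact hx
  · exact absurd (lt_of_le_of_lt (norm_nonneg _) hx) (not_lt.mpr hr)

/-- Key lemma: the "average along the segment" operator produces a function with
derivative `G` at every point of the ball, for `G` holomorphic on the ball. -/
lemma CKprimitive {R : ℝ} {c : ℂ} {G : ℂ → ℂ} (hG : DifferentiableOn ℂ G (ball c R))
    {x₀ : ℂ} (hx : x₀ ∈ ball c R) :
    HasDerivAt (fun x => (x - c) * ∫ s in (0:ℝ)..1, G (CKl c s x)) (G x₀) x₀ := by
  have hanal : AnalyticOnNhd ℂ G (ball c R) := hG.analyticOnNhd isOpen_ball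
  have hdc : ContinuousOn (deriv G) (ball c R) := (hanal.deriv).continuousOn
  have hGc : ContinuousOn G (ball c R) := hG.continuousOn
  rw [mem_ball, dist_eq_norm] at hx
  set ε' : ℝ := (R - ‖x₀ - c‖) / 2 with hε'
  have hε'pos : 0 < ε' := by
    have := hx; rw [hε']; linarith
  set r2 : ℝ := ‖x₀ - c‖ + ε' with hr2
  have hr2R : r2 < R := by rw [hr2, hε']; linarith
  have hTsub : closedBall c r2 ⊆ ball c R := closedBall_subset_ball hr2R
  -- bound on deriv G on the compact set T
  obtain ⟨K0, hK0⟩ := (isCompact_closedBall c r2).exists_bound_of_continuousOn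
    (hdc.mono hTsub)
  set K : ℝ := max K0 0 with hK
  have hKnn : 0 ≤ K := le_max_right _ _
  have hKb : ∀ z ∈ closedBall c r2, ‖deriv G z‖ ≤ K :=
    fun z hz => (hK0 z hz).trans (le_max_left _ _)
  -- G is K-Lipschitz on T
  have hGlip : ∀ z ∈ closedBall c r2, ∀ z' ∈ closedBall c r2, ‖G z - G z'‖ ≤ K * ‖z - z'‖ := by
    intro z hz z' hz'
    exact (convex_closedBall c r2).norm_image_sub_le_of_norm_hasDerivWithin_le
      (fun w hw => ((hG.differentiableAt (isOpen_ball.mem_nhds (hTsub hw))).hasDerivAt).hasDerivWithinAt)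
      (fun w hw => hKb w hw) hz' hz
  -- membership facts
  have hmemT : ∀ x ∈ closedBall x₀ ε', ∀ s ∈ Set.Icc (0:ℝ) 1, CKl c s x ∈ closedBall c r2 := by
    intro x hxm s hs
    apply CKl_mem_closedBall _ hs.1 hs.2
    calc ‖x - c‖ = ‖(x - x₀) + (x₀ - c)‖ := by ring_nf
      _ ≤ ‖x - x₀‖ + ‖x₀ - c‖ := norm_add_le _ _
      _ ≤ ε' + ‖x₀ - c‖ := by
          apply add_le_add_left
          rwa [mem_closedBall, dist_eq_norm] at hxm
      _ = r2 := by rw [hr2]; ring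
  have hx₀mem : x₀ ∈ closedBall x₀ ε' := mem_closedBall_self (le_of_lt hε'pos)
  -- continuity of s ↦ G (CKl c s x) on [0,1]
  have hcont : ∀ x ∈ closedBall x₀ ε', ContinuousOn (fun s => G (CKl c s x)) (Set.Icc (0:ℝ) 1) := by
    intro x hxm
    apply (hGc.mono hTsub).comp
    · apply Continuous.continuousOn
      unfold CKl; fun_prop
    · intro s hs; exact hmemT x hxm s hs
  have hcont' : ∀ x ∈ closedBall x₀ ε', ContinuousOn (fun s => G (CKl c s x)) (Set.uIcc (0:ℝ) 1) := by
    intro x hxm; rw [Set.uIcc_of_le zero_le_one]; exact hcont x hxm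
  have hIoc : (Set.uIoc (0:ℝ) 1) ⊆ Set.Icc (0:ℝ) 1 := by
    rw [Set.uIoc_of_le zero_le_one]; exact Set.Ioc_subset_Icc_self
  -- parametric differentiation
  have key := intervalIntegral.hasDerivAt_integral_of_dominated_loc_of_lip
    (𝕜 := ℂ) (μ := volume) (a := 0) (b := 1) (bound := fun _ => K)
    (F := fun x s => G (CKl c s x)) (F' := fun s => (s : ℂ) * deriv G (CKl c s x₀))
    (x₀ := x₀) (ball_mem_nhds x₀ hε'pos)
    ?_ ?_ ?_ ?_ ?_ ?_
  · obtain ⟨-, hkey⟩ := key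
    have hmul : HasDerivAt (fun x => (x - c) * ∫ s in (0:ℝ)..1, G (CKl c s x))
        (1 * (∫ s in (0:ℝ)..1, G (CKl c s x₀)) +
          (x₀ - c) * ∫ s in (0:ℝ)..1, (s : ℂ) * deriv G (CKl c s x₀)) x₀ :=
      ((hasDerivAt_id x₀).sub_const c).mul hkey
    convert hmul using 1
    rw [one_mul]
    -- FTC computation: φ s = s • G (CKl c s x₀)
    have hφ : ∀ s ∈ Set.uIcc (0:ℝ) 1,
        HasDerivAt (fun s : ℝ => (s : ℂ) * G (CKl c s x₀))
          (G (CKl c s x₀) + (s : ℂ) * (deriv G (CKl c s x₀) * (x₀ - c))) s := by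
      intro s hs
      rw [Set.uIcc_of_le zero_le_one] at hs
      have h1 : HasDerivAt (fun s : ℝ => (s : ℂ)) 1 s := by
        have := Complex.ofRealCLM.hasDerivAt (x := s); simp at this; exact this
      have hmem := hmemT x₀ hx₀mem s hs
      have hGd : HasDerivAt G (deriv G (CKl c s x₀)) (CKl c s x₀) :=
        (hG.differentiableAt (isOpen_ball.mem_nhds (hTsub hmem))).hasDerivAt
      have hcurve : HasDerivAt (fun s : ℝ => CKl c s x₀) (x₀ - c) s := by
        unfold CKl
        have : HasDerivAt (fun s : ℝ => (s : ℂ) * (x₀ - c)) (x₀ - c) s := by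
          simpa using h1.mul_const (x₀ - c)
        simpa using this.const_add c
      have hcomp : HasDerivAt (fun s : ℝ => G (CKl c s x₀))
          (deriv G (CKl c s x₀) * (x₀ - c)) s := by
        have := (hGd.hasFDerivAt.restrictScalars ℝ).comp_hasDerivAt s hcurve
        simp [smul_eq_mul, mul_comm] at this; exact this
      have := h1.mul hcomp
      exact this.congr_deriv (by ring)
    have hint : IntervalIntegrable
        (fun s : ℝ => G (CKl c s x₀) + (s : ℂ) * (deriv G (CKl c s x₀) * (x₀ - c)))
        volume 0 1 := by
      apply ContinuousOn.intervalIntegrable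
      apply (hcont' x₀ hx₀mem).add
      apply ContinuousOn.mul
      · apply Continuous.continuousOn; fun_prop
      · apply ContinuousOn.mul _ continuousOn_const
        apply (hdc.mono hTsub).comp
        · apply Continuous.continuousOn; unfold CKl; fun_prop
        · intro s hs
          rw [Set.uIcc_of_le zero_le_one] at hs
          exact hmemT x₀ hx₀mem s hs
    have hftc := intervalIntegral.integral_eq_sub_of_hasDerivAt hφ hint
    have hsplit : (∫ s in (0:ℝ)..1,
        (G (CKl c s x₀) + (s : ℂ) * (deriv G (CKl c s x₀) * (x₀ - c))))
        = (∫ s in (0:ℝ)..1, G (CKl c s x₀)) +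
          (x₀ - c) * ∫ s in (0:ℝ)..1, (s : ℂ) * deriv G (CKl c s x₀) := by
      rw [intervalIntegral.integral_add]
      · congr 1
        have : ∀ s : ℝ, (s : ℂ) * (deriv G (CKl c s x₀) * (x₀ - c))
            = (x₀ - c) • ((s : ℂ) * deriv G (CKl c s x₀)) := by
          intro s; simp [smul_eq_mul]; ring
        simp_rw [this]
        rw [intervalIntegral.integral_smul]
        simp [smul_eq_mul]
      · exact (ContinuousOn.intervalIntegrable (hcont' x₀ hx₀mem))
      · apply ContinuousOn.intervalIntegrable
        apply ContinuousOn.mul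
        · apply Continuous.continuousOn; fun_prop
        · apply ContinuousOn.mul _ continuousOn_const
          apply (hdc.mono hTsub).comp
          · apply Continuous.continuousOn; unfold CKl; fun_prop
          · intro s hs
            rw [Set.uIcc_of_le zero_le_one] at hs
            exact hmemT x₀ hx₀mem s hs
    rw [hsplit] at hftc
    have he1 : CKl c 1 x₀ = x₀ := by unfold CKl; push_cast; ring
    have he0 : ((0:ℝ) : ℂ) * G (CKl c 0 x₀) = 0 := by simp
    rw [he1] at hftc
    simp only [Complex.ofReal_one, one_mul, Complex.ofReal_zero, zero_mul, sub_zero] at hftc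
    exact hftc.symm
  · -- hF_meas
    filter_upwards [closedBall_mem_nhds x₀ hε'pos] with x hxm
    apply ContinuousOn.aestronglyMeasurable _ measurableSet_uIoc
    exact (hcont x hxm).mono hIoc
  · -- hF_int
    exact ContinuousOn.intervalIntegrable (hcont' x₀ hx₀mem)
  · -- hF'_meas
    apply ContinuousOn.aestronglyMeasurable _ measurableSet_uIoc
    apply ContinuousOn.mono _ hIoc
    apply ContinuousOn.mul
    · apply Continuous.continuousOn; fun_prop
    · apply (hdc.mono hTsub).comp
      · apply Continuous.continuousOn; unfold CKl; fun_prop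
      · intro s hs; exact hmemT x₀ hx₀mem s hs
  · -- h_lip
    apply Filter.Eventually.of_forall
    intro s hs
    replace hs := hIoc hs
    apply LipschitzOnWith.of_dist_le_mul
    intro x hxm x' hxm'
    have hxm2 : x ∈ closedBall x₀ ε' := ball_subset_closedBall hxm
    have hxm2' : x' ∈ closedBall x₀ ε' := ball_subset_closedBall hxm'
    rw [dist_eq_norm, dist_eq_norm]
    have hdiff : CKl c s x - CKl c s x' = (s : ℂ) * (x - x') := by unfold CKl; ring
    calc ‖G (CKl c s x) - G (CKl c s x')‖
        ≤ K * ‖CKl c s x - CKl c s x'‖ :=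
          hGlip _ (hmemT x hxm2 s hs) _ (hmemT x' hxm2' s hs)
      _ = K * (‖(s:ℂ)‖ * ‖x - x'‖) := by rw [hdiff, norm_mul]
      _ ≤ K * (1 * ‖x - x'‖) := by
          apply mul_le_mul_of_nonneg_left _ hKnn
          apply mul_le_mul_of_nonneg_right _ (norm_nonneg _)
          rw [Complex.norm_real, Real.norm_eq_abs, _root_.abs_of_nonneg hs.1]; exact hs.2
      _ = ↑(Real.nnabs K) * ‖x - x'‖ := by
          rw [one_mul, Real.coe_nnabs, _root_.abs_of_nonneg hKnn]
  · exact intervalIntegrable_const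
  · -- h_diff
    apply Filter.Eventually.of_forall
    intro s hs
    replace hs := hIoc hs
    have hmem := hmemT x₀ hx₀mem s hs
    have hGd : HasDerivAt G (deriv G (CKl c s x₀)) (CKl c s x₀) :=
      (hG.differentiableAt (isOpen_ball.mem_nhds (hTsub hmem))).hasDerivAt
    have hinner : HasDerivAt (fun x => CKl c s x) ((s : ℂ)) x₀ := by
      unfold CKl
      have : HasDerivAt (fun x : ℂ => (s : ℂ) * (x - c)) ((s : ℂ)) x₀ := by
        simpa using ((hasDerivAt_id x₀).sub_const c).const_mul ((s:ℂ))
      simpa using this.const_add c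
    have := hGd.comp x₀ hinner
    rw [mul_comm]; exact this

end CKprim

open Metric Complex intervalIntegral MeasureTheory Filter Finset Topology



noncomputable section CKpicard

/-- Existence of a holomorphic, conjugation-symmetric local solution of the complex ODE. -/
lemma CKcomplex_solution (g : ℂ × ℂ → ℂ) (t0 y0 ρ : ℝ) (hρ : 0 < ρ)
    (hg : AnalyticOnNhd ℂ g (ball ((t0:ℂ), (y0:ℂ)) ρ))
    (hconj : ∀ z ∈ ball ((t0:ℂ), (y0:ℂ)) ρ,
      g ((starRingEnd ℂ) z.1, (starRingEnd ℂ) z.2) = (starRingEnd ℂ) (g z)) :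
    ∃ ε > 0, ∃ y : ℂ → ℂ,
      DifferentiableOn ℂ y (ball (t0:ℂ) ε) ∧
      y (t0:ℂ) = (y0:ℂ) ∧
      (∀ t ∈ ball (t0:ℂ) ε, ((t, y t) ∈ ball ((t0:ℂ), (y0:ℂ)) ρ) ∧
        HasDerivAt y (g (t, y t)) t) ∧
      (∀ t ∈ ball (t0:ℂ) ε, y ((starRingEnd ℂ) t) = (starRingEnd ℂ) (y t)) := by
  set p0c : ℂ × ℂ := ((t0:ℂ), (y0:ℂ)) with hp0c
  set t0c : ℂ := (t0:ℂ) with ht0c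
  set y0c : ℂ := (y0:ℂ) with hy0c
  set r0 : ℝ := ρ/2 with hr0
  have hr0pos : 0 < r0 := by positivity
  set Kst : Set (ℂ × ℂ) := closedBall p0c r0 with hKst
  have hKsub : Kst ⊆ ball p0c ρ := closedBall_subset_ball (by rw [hr0]; linarith)
  -- bound for g
  obtain ⟨M0, hM0⟩ := (isCompact_closedBall p0c r0).exists_bound_of_continuousOn
    (hg.continuousOn.mono hKsub)
  set M : ℝ := max M0 0 with hM
  have hMnn : 0 ≤ M := le_max_right _ _
  have hMb : ∀ z ∈ Kst, ‖g z‖ ≤ M := fun z hz => (hM0 z hz).trans (le_max_left _ _)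
  -- Lipschitz bound for g
  obtain ⟨L0, hL0⟩ := (isCompact_closedBall p0c r0).exists_bound_of_continuousOn
    ((hg.fderiv.continuousOn).mono hKsub).norm
  set L : ℝ := max L0 0 with hL
  have hLnn : 0 ≤ L := le_max_right _ _
  have hglip : ∀ z ∈ Kst, ∀ z' ∈ Kst, ‖g z - g z'‖ ≤ L * ‖z - z'‖ := by
    intro z hz z' hz'
    apply (convex_closedBall p0c r0).norm_image_sub_le_of_norm_hasFDerivWithin_le
      (f' := fun w => (fderiv ℂ g w).restrictScalars ℝ)
      (fun w hw => (((hg _ (hKsub hw)).differentiableAt.hasFDerivAt).restrictScalars ℝ).hasFDerivWithinAt)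
      (fun w hw => ?_) hz' hz
    rw [ContinuousLinearMap.norm_restrictScalars]
    have h := hL0 w hw
    rw [Real.norm_eq_abs, _root_.abs_of_nonneg (norm_nonneg _)] at h
    exact h.trans (le_max_left L0 0)
  -- choice of ε
  set ε : ℝ := min (r0/2) (min (r0/(2*(M+1))) (1/(2*(L+1)))) with hε
  have hεpos : 0 < ε := by
    apply lt_min (by positivity) (lt_min (by positivity) (by positivity))
  have hεr0 : ε ≤ r0/2 := min_le_left _ _
  have hεM : M * ε ≤ r0/2 := by
    have h1 : ε ≤ r0/(2*(M+1)) := (min_le_right _ _).trans (min_le_left _ _)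
    have h2 : M * ε ≤ M * (r0/(2*(M+1))) := mul_le_mul_of_nonneg_left h1 hMnn
    calc M * ε ≤ M * (r0/(2*(M+1))) := h2
      _ ≤ (M+1) * (r0/(2*(M+1))) := by
          apply mul_le_mul_of_nonneg_right (by linarith) (by positivity)
      _ = r0/2 := by field_simp
  have hεL : L * ε ≤ 1/2 := by
    have h1 : ε ≤ 1/(2*(L+1)) := (min_le_right _ _).trans (min_le_right _ _)
    calc L * ε ≤ L * (1/(2*(L+1))) := mul_le_mul_of_nonneg_left h1 hLnn
      _ ≤ (L+1) * (1/(2*(L+1))) := by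
          apply mul_le_mul_of_nonneg_right (by linarith) (by positivity)
      _ = 1/2 := by field_simp
  set B : Set ℂ := ball t0c ε with hB
  have ht0B : t0c ∈ B := mem_ball_self hεpos
  -- membership in Kst
  have hmemK : ∀ t w : ℂ, ‖t - t0c‖ ≤ ε → ‖w - y0c‖ ≤ M * ε → (t, w) ∈ Kst := by
    intro t w h1 h2
    rw [hKst, mem_closedBall, Prod.dist_eq, dist_eq_norm, dist_eq_norm]
    apply max_le
    · exact h1.trans (by linarith)
    · exact h2.trans (by linarith)
  -- the Picard operator
  set Φ : (ℂ → ℂ) → ℂ → ℂ := fun u t =>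
    y0c + (t - t0c) * ∫ s in (0:ℝ)..1, g (CKl t0c s t, u (CKl t0c s t)) with hΦdef
  -- main step lemma
  have step : ∀ u : ℂ → ℂ, (∀ t ∈ B, ‖u t - y0c‖ ≤ M * ε) → DifferentiableOn ℂ u B →
      (∀ t ∈ B, ‖Φ u t - y0c‖ ≤ M * ε) ∧ DifferentiableOn ℂ (Φ u) B ∧
        (∀ t ∈ B, HasDerivAt (Φ u) (g (t, u t)) t) := by
    intro u hub hud
    have humem : ∀ z ∈ B, (z, u z) ∈ Kst := by
      intro z hz
      apply hmemK _ _ _ (hub z hz)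
      rw [mem_ball, dist_eq_norm] at hz
      exact le_of_lt (lt_of_lt_of_le hz (by linarith))
    have hGud : DifferentiableOn ℂ (fun z => g (z, u z)) B := by
      intro z hz
      have h1 : DifferentiableAt ℂ g ((z, u z)) :=
        (hg _ (hKsub (humem z hz))).differentiableAt
      have h2 : DifferentiableAt ℂ (fun z => (z, u z)) z :=
        differentiableAt_id.prodMk ((hud z hz).differentiableAt (isOpen_ball.mem_nhds hz))
      exact (h1.comp z h2).differentiableWithinAt
    have hΦd : ∀ t ∈ B, HasDerivAt (Φ u) (g (t, u t)) t := by
      intro t ht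
      have := CKprimitive (R := ε) (c := t0c) hGud ht
      exact this.const_add y0c
    refine ⟨?_, fun t ht => ((hΦd t ht).differentiableAt).differentiableWithinAt, hΦd⟩
    intro t ht
    have htn : ‖t - t0c‖ < ε := by rwa [mem_ball, dist_eq_norm] at ht
    have hbint : ‖∫ s in (0:ℝ)..1, g (CKl t0c s t, u (CKl t0c s t))‖ ≤ M := by
      have := intervalIntegral.norm_integral_le_of_norm_le_const
        (C := M) (f := fun s => g (CKl t0c s t, u (CKl t0c s t))) (a := 0) (b := 1) ?_
      · simpa using this
      · intro s hs
        rw [Set.uIoc_of_le zero_le_one] at hs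
        have hsB : CKl t0c s t ∈ B := CKl_mem_ball htn (le_of_lt hs.1) hs.2
        exact hMb _ (humem _ hsB)
    have : Φ u t - y0c = (t - t0c) * ∫ s in (0:ℝ)..1, g (CKl t0c s t, u (CKl t0c s t)) := by
      rw [hΦdef]; ring
    rw [this, norm_mul]
    calc ‖t - t0c‖ * ‖∫ s in (0:ℝ)..1, g (CKl t0c s t, u (CKl t0c s t))‖
        ≤ ε * M := by
          apply mul_le_mul (le_of_lt htn) hbint (norm_nonneg _) (le_of_lt hεpos)
      _ = M * ε := mul_comm _ _
  -- contraction lemma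
  have contract : ∀ u v : ℂ → ℂ, (∀ t ∈ B, ‖u t - y0c‖ ≤ M * ε) →
      (∀ t ∈ B, ‖v t - y0c‖ ≤ M * ε) → ContinuousOn u B → ContinuousOn v B →
      ∀ δ : ℝ, 0 ≤ δ → (∀ t ∈ B, ‖u t - v t‖ ≤ δ) →
      ∀ t ∈ B, ‖Φ u t - Φ v t‖ ≤ L * ε * δ := by
    intro u v hub hvb huc hvc δ hδ hδb t ht
    have htn : ‖t - t0c‖ < ε := by rwa [mem_ball, dist_eq_norm] at ht
    have humem : ∀ z ∈ B, (z, u z) ∈ Kst := by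
      intro z hz
      apply hmemK _ _ _ (hub z hz)
      rw [mem_ball, dist_eq_norm] at hz
      exact le_of_lt (lt_of_lt_of_le hz (by linarith))
    have hvmem : ∀ z ∈ B, (z, v z) ∈ Kst := by
      intro z hz
      apply hmemK _ _ _ (hvb z hz)
      rw [mem_ball, dist_eq_norm] at hz
      exact le_of_lt (lt_of_lt_of_le hz (by linarith))
    have hsmemB : ∀ s ∈ Set.uIcc (0:ℝ) 1, CKl t0c s t ∈ B := by
      intro s hs
      rw [Set.uIcc_of_le zero_le_one] at hs
      exact CKl_mem_ball htn hs.1 hs.2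
    have hcontl : Continuous (fun s : ℝ => CKl t0c s t) := by
      unfold CKl; fun_prop
    have hiu : IntervalIntegrable (fun s => g (CKl t0c s t, u (CKl t0c s t))) volume 0 1 := by
      apply ContinuousOn.intervalIntegrable
      apply (hg.continuousOn.mono hKsub).comp
        (Continuous.continuousOn (by fun_prop) |>.prodMk
          (huc.comp hcontl.continuousOn hsmemB))
      intro s hs
      exact humem _ (hsmemB s hs)
    have hiv : IntervalIntegrable (fun s => g (CKl t0c s t, v (CKl t0c s t))) volume 0 1 := by
      apply ContinuousOn.intervalIntegrable
      apply (hg.continuousOn.mono hKsub).comp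
        (Continuous.continuousOn (by fun_prop) |>.prodMk
          (hvc.comp hcontl.continuousOn hsmemB))
      intro s hs
      exact hvmem _ (hsmemB s hs)
    have hkey : Φ u t - Φ v t = (t - t0c) *
        ∫ s in (0:ℝ)..1, (g (CKl t0c s t, u (CKl t0c s t)) - g (CKl t0c s t, v (CKl t0c s t))) := by
      rw [hΦdef, intervalIntegral.integral_sub hiu hiv]; ring
    rw [hkey, norm_mul]
    have hbint : ‖∫ s in (0:ℝ)..1,
        (g (CKl t0c s t, u (CKl t0c s t)) - g (CKl t0c s t, v (CKl t0c s t)))‖ ≤ L * δ := by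
      have := intervalIntegral.norm_integral_le_of_norm_le_const (C := L * δ)
        (f := fun s => g (CKl t0c s t, u (CKl t0c s t)) - g (CKl t0c s t, v (CKl t0c s t)))
        (a := 0) (b := 1) ?_
      · simpa using this
      · intro s hs
        rw [Set.uIoc_of_le zero_le_one] at hs
        have hsB : CKl t0c s t ∈ B := CKl_mem_ball htn (le_of_lt hs.1) hs.2
        calc ‖g (CKl t0c s t, u (CKl t0c s t)) - g (CKl t0c s t, v (CKl t0c s t))‖
            ≤ L * ‖((CKl t0c s t, u (CKl t0c s t)) : ℂ × ℂ) - (CKl t0c s t, v (CKl t0c s t))‖ :=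
              hglip _ (humem _ hsB) _ (hvmem _ hsB)
          _ = L * ‖u (CKl t0c s t) - v (CKl t0c s t)‖ := by
              congr 1
              rw [Prod.norm_def]
              simp [Prod.fst_sub, Prod.snd_sub]
          _ ≤ L * δ := mul_le_mul_of_nonneg_left (hδb _ hsB) hLnn
    calc ‖t - t0c‖ * ‖∫ s in (0:ℝ)..1,
          (g (CKl t0c s t, u (CKl t0c s t)) - g (CKl t0c s t, v (CKl t0c s t)))‖
        ≤ ε * (L * δ) := by
          apply mul_le_mul (le_of_lt htn) hbint (norm_nonneg _) (le_of_lt hεpos)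
      _ = L * ε * δ := by ring
  -- Picard iterates
  set P : ℕ → ℂ → ℂ := fun k => Nat.rec (fun _ => y0c) (fun _ Pk => Φ Pk) k with hPdef
  have hP0 : P 0 = fun _ => y0c := rfl
  have hPs : ∀ k, P (k+1) = Φ (P k) := fun k => rfl
  -- invariants
  have hInv : ∀ k, (∀ t ∈ B, ‖P k t - y0c‖ ≤ M * ε) ∧ DifferentiableOn ℂ (P k) B := by
    intro k
    induction k with
    | zero =>
      constructor
      · intro t ht; simp [hP0]; positivity
      · rw [hP0]; exact differentiableOn_const _
    | succ n ih =>
      obtain ⟨h1, h2, _⟩ := step (P n) ih.1 ih.2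
      exact ⟨by rw [hPs]; exact h1, by rw [hPs]; exact h2⟩
  -- difference bounds
  have hD : ∀ k, ∀ t ∈ B, ‖P (k+1) t - P k t‖ ≤ (M * ε) * (L * ε)^k := by
    intro k
    induction k with
    | zero =>
      intro t ht
      have := ((step (P 0) (hInv 0).1 (hInv 0).2).1) t ht
      rw [hPs]
      simpa [hP0] using this
    | succ n ih =>
      intro t ht
      have hc := contract (P (n+1)) (P n) (hInv (n+1)).1 (hInv n).1
        (hInv (n+1)).2.continuousOn (hInv n).2.continuousOn
        ((M * ε) * (L * ε)^n) (by positivity) ih t ht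
      rw [hPs (n+1), hPs n]
      calc ‖Φ (P (n+1)) t - Φ (P n) t‖ ≤ L * ε * ((M * ε) * (L * ε)^n) := hc
        _ = (M * ε) * (L * ε)^(n+1) := by ring
  -- uniform convergence
  set F : ℕ → ℂ → ℂ := fun k t => P (k+1) t - P k t with hFdef
  set u : ℕ → ℝ := fun k => (M * ε) * (L * ε)^k with hudef
  have hLε1 : L * ε < 1 := lt_of_le_of_lt hεL (by norm_num)
  have hLεnn : 0 ≤ L * ε := by positivity
  have husum : Summable u := by
    apply Summable.mul_left
    exact summable_geometric_of_lt_one hLεnn hLε1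
  have hFb : ∀ k, ∀ t ∈ B, ‖F k t‖ ≤ u k := fun k t ht => hD k t ht
  have htn := tendstoUniformlyOn_tsum_nat husum hFb
  set y : ℂ → ℂ := fun t => y0c + ∑' k, F k t with hydef
  have hPpart : ∀ n t, P n t = y0c + ∑ k ∈ Finset.range n, F k t := by
    intro n t
    rw [hFdef]
    simp only
    rw [Finset.sum_range_sub (f := fun k => P k t)]
    simp [hP0]
  have hPy : TendstoUniformlyOn (fun n t => P n t) y atTop B := by
    rw [Metric.tendstoUniformlyOn_iff] at htn ⊢
    intro η hη
    filter_upwards [htn η hη] with n hn t ht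
    have := hn t ht
    rw [hPpart n t, hydef]
    simpa [dist_eq_norm] using this
  have hyd : DifferentiableOn ℂ y B := by
    apply hPy.tendstoLocallyUniformlyOn.differentiableOn _ isOpen_ball
    exact Eventually.of_forall (fun n => (hInv n).2
)
  have hylim : ∀ t ∈ B, Tendsto (fun n => P n t) atTop (𝓝 (y t)) :=
    fun t ht => hPy.tendsto_at ht
  have hyb : ∀ t ∈ B, ‖y t - y0c‖ ≤ M * ε := by
    intro t ht
    apply le_of_tendsto (((hylim t ht).sub_const y0c).norm)
    exact Eventually.of_forall (fun n => (hInv n).1 t ht)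
  -- summability of F · t
  have hFsum : ∀ t ∈ B, Summable (fun k => F k t) := by
    intro t ht
    exact Summable.of_norm_bounded husum (fun k => hFb k t ht)
  -- tail bound
  set v : ℕ → ℝ := fun n => ∑' k, u (k + n) with hvdef
  have hvnn : ∀ n, 0 ≤ v n := by
    intro n
    apply tsum_nonneg
    intro k
    rw [hudef]; positivity
  have hv0 : Tendsto v atTop (𝓝 0) := by
    rw [hvdef]
    exact tendsto_sum_nat_add u
  have htail : ∀ n, ∀ t ∈ B, ‖y t - P n t‖ ≤ v n := by
    intro n t ht
    have hsn : Summable (fun k => ‖F (k + n) t‖) := by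
      apply Summable.of_nonneg_of_le (fun k => norm_nonneg _)
        (fun k => hFb (k + n) t ht)
      exact (summable_nat_add_iff n).2 husum
    have h1 : y t - P n t = ∑' k, F (k + n) t := by
      rw [hydef, hPpart n t]
      simp only [add_sub_add_left_eq_sub]
      rw [← Summable.sum_add_tsum_nat_add n (hFsum t ht)]
      ring
    rw [h1]
    calc ‖∑' k, F (k + n) t‖ ≤ ∑' k, ‖F (k + n) t‖ := norm_tsum_le_tsum_norm hsn
      _ ≤ v n := by
          apply Summable.tsum_le_tsum (fun k => hFb (k + n) t ht) hsn
          exact (summable_nat_add_iff n).2 husum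
  -- fixed point property
  have hfix : ∀ t ∈ B, y t = Φ y t := by
    intro t ht
    have h1 : Tendsto (fun n => P (n+1) t) atTop (𝓝 (y t)) :=
      (hylim t ht).comp (tendsto_add_atTop_nat 1)
    have h2 : Tendsto (fun n => Φ (P n) t) atTop (𝓝 (Φ y t)) := by
      rw [tendsto_iff_dist_tendsto_zero]
      apply squeeze_zero (fun n => dist_nonneg)
        (g := fun n => L * ε * v n)
      · intro n
        rw [dist_eq_norm]
        apply contract (P n) y (hInv n).1 hyb (hInv n).2.continuousOn hyd.continuousOn
          (v n) (hvnn n) ?_ t ht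
        intro t' ht'
        rw [← norm_neg, neg_sub]
        exact htail n t' ht'
      · simpa using hv0.const_mul (L * ε)
    have h3 : ∀ n, P (n+1) t = Φ (P n) t := fun n => by rw [hPs]
    rw [funext h3] at h1
    exact tendsto_nhds_unique h1 h2
  -- derivative of y
  have hyder : ∀ t ∈ B, HasDerivAt y (g (t, y t)) t := by
    intro t ht
    have hstep := (step y hyb hyd).2.2 t ht
    apply hstep.congr_of_eventuallyEq
    filter_upwards [isOpen_ball.mem_nhds ht] with t' ht'
    exact hfix t' ht'
  -- value at t0
  have hy0 : y t0c = y0c := by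
    have := hfix t0c ht0B
    rw [this, hΦdef]
    simp
  -- conjugation symmetry of iterates
  have hBconj : ∀ t ∈ B, (starRingEnd ℂ) t ∈ B := by
    intro t ht
    rw [hB, mem_ball] at ht ⊢
    have : (starRingEnd ℂ) t0c = t0c := by rw [ht0c]; exact Complex.conj_ofReal t0
    calc dist ((starRingEnd ℂ) t) t0c = dist ((starRingEnd ℂ) t) ((starRingEnd ℂ) t0c) := by
          rw [this]
      _ = dist t t0c := Complex.dist_conj_conj t t0c
      _ < ε := ht
  have hPconj : ∀ k, ∀ t ∈ B, P k ((starRingEnd ℂ) t) = (starRingEnd ℂ) (P k t) := by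
    intro k
    induction k with
    | zero =>
      intro t ht
      simp [hP0, hy0c, Complex.conj_ofReal]
    | succ n ih =>
      intro t ht
      have htn : ‖t - t0c‖ < ε := by rwa [mem_ball, dist_eq_norm] at ht
      have hlconj : ∀ s : ℝ, CKl t0c s ((starRingEnd ℂ) t) = (starRingEnd ℂ) (CKl t0c s t) := by
        intro s
        unfold CKl
        rw [map_add, map_mul, map_sub]
        rw [ht0c, Complex.conj_ofReal, Complex.conj_ofReal]
      have hint : ∀ s ∈ Set.uIcc (0:ℝ) 1,
          g (CKl t0c s ((starRingEnd ℂ) t), P n (CKl t0c s ((starRingEnd ℂ) t)))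
          = (starRingEnd ℂ) (g (CKl t0c s t, P n (CKl t0c s t))) := by
        intro s hs
        rw [Set.uIcc_of_le zero_le_one] at hs
        have hsB : CKl t0c s t ∈ B := CKl_mem_ball htn hs.1 hs.2
        rw [hlconj s, ih _ hsB]
        have hmem : ((CKl t0c s t, P n (CKl t0c s t)) : ℂ × ℂ) ∈ ball p0c ρ := by
          apply hKsub
          apply hmemK _ _ _ ((hInv n).1 _ hsB)
          rw [mem_ball, dist_eq_norm] at hsB
          exact le_of_lt (lt_of_lt_of_le hsB (by linarith))
        exact hconj _ hmem
      rw [hPs n]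
      simp only [hΦdef]
      rw [intervalIntegral.integral_congr hint]
      have hci : IntervalIntegrable (fun s => g (CKl t0c s t, P n (CKl t0c s t))) volume 0 1 := by
        apply ContinuousOn.intervalIntegrable
        apply (hg.continuousOn.mono hKsub).comp
        · apply ContinuousOn.prodMk
          · apply Continuous.continuousOn; unfold CKl; fun_prop
          · apply ((hInv n).2.continuousOn).comp
            · apply Continuous.continuousOn; unfold CKl; fun_prop
            · intro s hs
              rw [Set.uIcc_of_le zero_le_one] at hs
              exact CKl_mem_ball htn hs.1 hs.2
        · intro s hs
          rw [Set.uIcc_of_le zero_le_one] at hs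
          have hsB : CKl t0c s t ∈ B := CKl_mem_ball htn hs.1 hs.2
          apply hmemK _ _ _ ((hInv n).1 _ hsB)
          rw [mem_ball, dist_eq_norm] at hsB
          exact le_of_lt (lt_of_lt_of_le hsB (by linarith))
      have hcc : (∫ s in (0:ℝ)..1, (starRingEnd ℂ) (g (CKl t0c s t, P n (CKl t0c s t))))
          = (starRingEnd ℂ) (∫ s in (0:ℝ)..1, g (CKl t0c s t, P n (CKl t0c s t))) := by
        have := Complex.conjCLE.toContinuousLinearMap.intervalIntegral_comp_comm hci
          (a := 0) (b := 1)
        simpa using this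
      rw [hcc, map_add, map_mul, map_sub, hy0c, ht0c, Complex.conj_ofReal,
        Complex.conj_ofReal]
  have hyconj : ∀ t ∈ B, y ((starRingEnd ℂ) t) = (starRingEnd ℂ) (y t) := by
    intro t ht
    have h1 : Tendsto (fun n => P n ((starRingEnd ℂ) t)) atTop (𝓝 (y ((starRingEnd ℂ) t))) :=
      hylim _ (hBconj t ht)
    have h2 : Tendsto (fun n => (starRingEnd ℂ) (P n t)) atTop
        (𝓝 ((starRingEnd ℂ) (y t))) := by
      exact (Complex.conjCLE.continuous.tendsto _).comp (hylim t ht)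
    have h3 : ∀ n, P n ((starRingEnd ℂ) t) = (starRingEnd ℂ) (P n t) :=
      fun n => hPconj n t ht
    rw [funext h3] at h1
    exact tendsto_nhds_unique h1 h2
  -- conclusion
  refine ⟨ε, hεpos, y, hyd, hy0, ?_, hyconj⟩
  intro t ht
  have htn : ‖t - t0c‖ < ε := by rwa [mem_ball, dist_eq_norm] at ht
  exact ⟨hKsub (hmemK t (y t) (le_of_lt htn) (hyb t ht)), hyder t ht⟩

end CKpicard

open Metric Complex Filter Topology Set



section CKlip

/-- An analytic function is locally Lipschitz in the second variable near the point. -/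
lemma CKf_lip (f : ℝ × ℝ → ℝ) (p0 : ℝ × ℝ) (hf : AnalyticAt ℝ f p0) :
    ∃ δ > 0, ∃ C ≥ 0, ∀ a ∈ closedBall p0 δ, ∀ b ∈ closedBall p0 δ,
      ‖f a - f b‖ ≤ C * ‖a - b‖ := by
  obtain ⟨pf, rf, hrf⟩ := hf
  obtain ⟨rr, hrr0, hrr⟩ := ENNReal.lt_iff_exists_nnreal_btwn.mp hrf.r_pos
  have hrrpos : (0:ℝ) < (rr : ℝ) := by exact_mod_cast hrr0
  set δ : ℝ := (rr : ℝ)/2 with hδ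
  have hδpos : 0 < δ := by positivity
  have hsub : closedBall p0 δ ⊆ Metric.eball p0 rf := by
    intro x hx
    rw [Metric.mem_eball, edist_dist]
    calc ENNReal.ofReal (dist x p0) ≤ ENNReal.ofReal δ :=
          ENNReal.ofReal_le_ofReal (by rwa [mem_closedBall] at hx)
      _ < (rr : ENNReal) := by
          rw [← ENNReal.ofReal_coe_nnreal]
          apply ENNReal.ofReal_lt_ofReal_iff hrrpos |>.mpr
          rw [hδ]; linarith
      _ < rf := hrr
  have hfa : AnalyticOnNhd ℝ f (Metric.eball p0 rf) := hrf.analyticOnNhd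
  obtain ⟨C0, hC0⟩ := (isCompact_closedBall p0 δ).exists_bound_of_continuousOn
    ((hfa.fderiv.continuousOn).mono hsub).norm
  set C : ℝ := max C0 0 with hC
  refine ⟨δ, hδpos, C, le_max_right _ _, ?_⟩
  intro a ha b hb
  apply (convex_closedBall p0 δ).norm_image_sub_le_of_norm_hasFDerivWithin_le
    (f' := fun w => fderiv ℝ f w)
    (fun w hw => ((hfa _ (hsub hw)).differentiableAt.hasFDerivAt).hasFDerivWithinAt)
    (fun w hw => ?_) hb ha
  have h := hC0 w hw
  rw [Real.norm_eq_abs, _root_.abs_of_nonneg (norm_nonneg _)] at h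
  exact h.trans (le_max_left _ _)

end CKlip

/-- Cauchy–Kovalevskaya theorem, scalar first-order case: if `f` is real-analytic
near `(t0, y0)`, then the ODE `y' = f (t, y t)`, `y t0 = y0` has a unique
real-analytic local solution. -/
theorem cauchy_kovalevskaya_scalar (f : ℝ × ℝ → ℝ) (t0 y0 : ℝ)
    (hf : AnalyticAt ℝ f (t0, y0)) :
    ∃ ε > 0, ∃ y : ℝ → ℝ,
      (AnalyticOnNhd ℝ y (ball t0 ε)) ∧ y t0 = y0 ∧
      (∀ t ∈ ball t0 ε, HasDerivAt y (f (t, y t)) t) ∧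
      ∀ z : ℝ → ℝ,
        AnalyticOnNhd ℝ z (ball t0 ε) → z t0 = y0 →
        (∀ t ∈ ball t0 ε, HasDerivAt z (f (t, z t)) t) →
        ∀ t ∈ ball t0 ε, z t = y t := by
  obtain ⟨g, ρ, hρ, hganal, hgreal, hgconj⟩ := CKg_exists f (t0, y0) hf
  have hcc : CKcc (t0, y0) = ((t0:ℂ), (y0:ℂ)) := rfl
  rw [hcc] at hganal hgconj
  obtain ⟨ε, hεpos, yC, hyCd, hyC0, hyCprop, hyCconj⟩ :=
    CKcomplex_solution g t0 y0 ρ hρ hganal hgconj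
  set u : ℝ → ℝ := fun t => (yC (t:ℂ)).re with hudef
  have htB : ∀ t ∈ ball t0 ε, (t:ℂ) ∈ ball (t0:ℂ) ε := by
    intro t ht
    rw [mem_ball] at ht ⊢
    rwa [Complex.isometry_ofReal.dist_eq]
  -- reality of yC on the real axis
  have hyreal : ∀ t ∈ ball t0 ε, yC (t:ℂ) = ((u t : ℝ) : ℂ) := by
    intro t ht
    have h1 := hyCconj _ (htB t ht)
    rw [Complex.conj_ofReal] at h1
    have h2 : (starRingEnd ℂ) (yC (t:ℂ)) = yC (t:ℂ) := h1.symm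
    rw [Complex.conj_eq_iff_re] at h2
    rw [hudef]
    exact h2.symm
  -- analyticity of u
  have hyCanal : AnalyticOnNhd ℂ yC (ball (t0:ℂ) ε) := hyCd.analyticOnNhd isOpen_ball
  have huanal : AnalyticOnNhd ℝ u (ball t0 ε) := by
    intro t ht
    have h1 : AnalyticAt ℝ yC ((t:ℂ)) := (hyCanal _ (htB t ht)).restrictScalars
    have h2 : AnalyticAt ℝ (fun x : ℝ => (x : ℂ)) t := Complex.ofRealCLM.analyticAt t
    have h3 : AnalyticAt ℝ (fun x : ℝ => yC (x:ℂ)) t := h1.comp h2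
    have h4 : AnalyticAt ℝ (fun z : ℂ => z.re) (yC ((t:ℂ))) := Complex.reCLM.analyticAt _
    have h5 := AnalyticAt.comp (g := fun z : ℂ => z.re) (f := fun x : ℝ => yC (x:ℂ))
      (x := t) h4 h3
    exact h5
  -- initial value
  have hu0 : u t0 = y0 := by rw [hudef]; simp [hyC0]
  -- derivative of u
  have huder : ∀ t ∈ ball t0 ε, HasDerivAt u (f (t, u t)) t := by
    intro t ht
    obtain ⟨hmem, hder⟩ := hyCprop _ (htB t ht)
    have hval : g ((t:ℂ), yC (t:ℂ)) = ((f (t, u t) : ℝ) : ℂ) := by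
      have h1 : ((t:ℂ), yC (t:ℂ)) = CKcc (t, u t) := by
        rw [CKcc]
        exact Prod.ext rfl (hyreal t ht)
      rw [h1]
      apply hgreal
      have h2 : dist ((t, u t) : ℝ × ℝ) (t0, y0) = dist (((t:ℂ), yC (t:ℂ)) : ℂ × ℂ)
          (((t0:ℂ), (y0:ℂ)) : ℂ × ℂ) := by
        rw [Prod.dist_eq, Prod.dist_eq]
        congr 1
        · exact (Complex.isometry_ofReal.dist_eq t t0).symm
        · rw [hyreal t ht]
          exact (Complex.isometry_ofReal.dist_eq (u t) y0).symm
      rw [h2]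
      rwa [mem_ball] at hmem
    rw [hval] at hder
    have := hder.real_of_complex
    simpa using this
  -- Lipschitz data for uniqueness
  obtain ⟨δ, hδpos, C, hCnn, hflip⟩ := CKf_lip f (t0, y0) hf
  set τ : ℝ → ℝ := fun t => max (t0 - δ) (min t (t0 + δ)) with hτdef
  have hτ1 : ∀ t, |τ t - t0| ≤ δ := by
    intro t
    rw [abs_le]
    constructor
    · have : t0 - δ ≤ τ t := le_max_left _ _
      linarith
    · have : τ t ≤ t0 + δ := max_le (by linarith) (min_le_right _ _)
      linarith
  have hτ2 : ∀ t, |t - t0| ≤ δ → τ t = t := by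
    intro t ht
    rw [abs_le] at ht
    rw [hτdef]
    simp only
    rw [min_eq_left (by linarith), max_eq_right (by linarith)]
  set v : ℝ → ℝ → ℝ := fun t w => f (τ t, w) with hvdef
  have hv : ∀ t, LipschitzOnWith (Real.toNNReal C) (v t) (closedBall y0 δ) := by
    intro t
    apply LipschitzOnWith.of_dist_le_mul
    intro w hw w' hw'
    rw [mem_closedBall] at hw hw'
    have hmem : ∀ w'' : ℝ, dist w'' y0 ≤ δ → ((τ t, w'') : ℝ × ℝ) ∈ closedBall (t0, y0) δ := by
      intro w'' hw''
      rw [mem_closedBall, Prod.dist_eq]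
      apply max_le _ hw''
      rw [Real.dist_eq]
      exact hτ1 t
    have h1 := hflip _ (hmem w hw) _ (hmem w' hw')
    rw [Real.coe_toNNReal C hCnn]
    rw [dist_eq_norm, dist_eq_norm]
    calc ‖f (τ t, w) - f (τ t, w')‖ ≤ C * ‖((τ t, w) : ℝ × ℝ) - (τ t, w')‖ := h1
      _ = C * ‖w - w'‖ := by
          congr 1
          rw [Prod.norm_def]
          simp [Prod.fst_sub, Prod.snd_sub]
  -- the uniqueness part
  refine ⟨ε, hεpos, u, huanal, hu0, huder, ?_⟩
  intro z hz hz0 hzder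
  have hucont : ContinuousAt u t0 := (huanal t0 (mem_ball_self hεpos)).continuousAt
  have hzcont : ContinuousAt z t0 := (hz t0 (mem_ball_self hεpos)).continuousAt
  have huev : ∀ᶠ t in 𝓝 t0, HasDerivAt u (v t (u t)) t ∧ u t ∈ closedBall y0 δ := by
    have e1 : ∀ᶠ t in 𝓝 t0, u t ∈ closedBall y0 δ := by
      apply hucont.eventually_mem
      rw [hu0]
      exact Metric.closedBall_mem_nhds y0 hδpos
    have e2 : ∀ᶠ t in 𝓝 t0, t ∈ ball t0 ε := isOpen_ball.eventually_mem (mem_ball_self hεpos)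
    have e3 : ∀ᶠ t in 𝓝 t0, |t - t0| ≤ δ := by
      filter_upwards [Metric.closedBall_mem_nhds t0 hδpos] with t ht
      rwa [mem_closedBall, Real.dist_eq] at ht
    filter_upwards [e1, e2, e3] with t h1 h2 h3
    refine ⟨?_, h1⟩
    rw [hvdef]
    simp only
    rw [hτ2 t h3]
    exact huder t h2
  have hzev : ∀ᶠ t in 𝓝 t0, HasDerivAt z (v t (z t)) t ∧ z t ∈ closedBall y0 δ := by
    have e1 : ∀ᶠ t in 𝓝 t0, z t ∈ closedBall y0 δ := by
      apply hzcont.eventually_mem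
      rw [hz0]
      exact Metric.closedBall_mem_nhds y0 hδpos
    have e2 : ∀ᶠ t in 𝓝 t0, t ∈ ball t0 ε := isOpen_ball.eventually_mem (mem_ball_self hεpos)
    have e3 : ∀ᶠ t in 𝓝 t0, |t - t0| ≤ δ := by
      filter_upwards [Metric.closedBall_mem_nhds t0 hδpos] with t ht
      rwa [mem_closedBall, Real.dist_eq] at ht
    filter_upwards [e1, e2, e3] with t h1 h2 h3
    refine ⟨?_, h1⟩
    rw [hvdef]
    simp only
    rw [hτ2 t h3]
    exact hzder t h2
  have hequ : z =ᶠ[𝓝 t0] u :=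
    ODE_solution_unique_of_eventually (s := fun _ => closedBall y0 δ) (Eventually.of_forall hv) hzev huev (by rw [hz0, hu0])
  have heq := AnalyticOnNhd.eqOn_of_preconnected_of_eventuallyEq hz huanal
    (convex_ball t0 ε).isPreconnected (mem_ball_self hεpos) hequ
  intro t ht
  exact heq ht
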